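/- Let n ≥ 2 and let λ_1 ≥ … ≥ λ_n ≥ 0 be real numbers; set λ_k := 0 for every index k > n. Then the point of ℝ^{n(n−1)/2} × ℝ^{n(n+1)/2} given by y_{i,j} = λ_{i+j−1} for 2 ≤ i ≤ j ≤ n and z_{i,j} = λ_{i+j} for 1 ≤ i ≤ j ≤ n belongs to the type B_n/C_n Gelfand–Tsetlin polytope GT_{BC_n}(λ) and is a vertex (extreme point) of GT_{BC_n}(λ). -/

import Mathlib

/-- Index set for the `y`-entries: pairs `(i, j)` with `2 ≤ i ≤ j ≤ n`. -/
abbrev BCYIdx (n : ℕ) := {p : ℕ × ℕ // 2 ≤ p.1 ∧ p.1 ≤ p.2 ∧ p.2 ≤ n}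

/-- Index set for the `z`-entries: pairs `(i, j)` with `1 ≤ i ≤ j ≤ n`. -/
abbrev BCZIdx (n : ℕ) := {p : ℕ × ℕ // 1 ≤ p.1 ∧ p.1 ≤ p.2 ∧ p.2 ≤ n}

/-- The `y_{i,j}` coordinate of a point, with the convention `y_{1,j} = λ_j`
(`0` for out-of-range indices). -/
def bcY (n : ℕ) (lam : ℕ → ℝ) (w : (BCYIdx n → ℝ) × (BCZIdx n → ℝ)) (i j : ℕ) : ℝ :=
  if i = 1 ∧ 1 ≤ j ∧ j ≤ n then lam j
  else if h : 2 ≤ i ∧ i ≤ j ∧ j ≤ n then w.1 ⟨(i, j), h⟩ else 0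

/-- The `z_{i,j}` coordinate of a point (`0` for out-of-range indices). -/
def bcZ (n : ℕ) (w : (BCYIdx n → ℝ) × (BCZIdx n → ℝ)) (i j : ℕ) : ℝ :=
  if h : 1 ≤ i ∧ i ≤ j ∧ j ≤ n then w.2 ⟨(i, j), h⟩ else 0

/-- The type `Bₙ/Cₙ` Gelfand–Tsetlin polytope of `λ`. -/
def GTBC (n : ℕ) (lam : ℕ → ℝ) : Set ((BCYIdx n → ℝ) × (BCZIdx n → ℝ)) :=
  {w | (∀ i j, 1 ≤ i → i ≤ j → j ≤ n - 1 →
         bcY n lam w i j ≥ bcZ n w i j ∧ bcZ n w i j ≥ bcY n lam w i (j + 1)) ∧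
       (∀ i, 1 ≤ i → i ≤ n → bcY n lam w i n ≥ bcZ n w i n ∧ bcZ n w i n ≥ 0) ∧
       (∀ i j, 1 ≤ i → i ≤ n - 1 → i + 1 ≤ j → j ≤ n →
         bcZ n w i (j - 1) ≥ bcY n lam w (i + 1) j ∧ bcY n lam w (i + 1) j ≥ bcZ n w i j)}

/-- The explicit pattern `y_{i,j} = λ_{i+j−1}`, `z_{i,j} = λ_{i+j}` (with `λ_k := 0` for
`k > n`) is a vertex of the type `Bₙ/Cₙ` Gelfand–Tsetlin polytope. -/
theorem statement7 (n : ℕ) (hn : 2 ≤ n) (lam : ℕ → ℝ)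
    (hmono : ∀ j, 1 ≤ j → j + 1 ≤ n → lam (j + 1) ≤ lam j) (hpos : 0 ≤ lam n)
    (hzero : ∀ k, n < k → lam k = 0)
    (w : (BCYIdx n → ℝ) × (BCZIdx n → ℝ))
    (hw : w = (fun p => lam (p.1.1 + p.1.2 - 1), fun p => lam (p.1.1 + p.1.2))) :
    w ∈ GTBC n lam ∧ w ∈ (GTBC n lam).extremePoints ℝ := by
  subst hw
  set W : (BCYIdx n → ℝ) × (BCZIdx n → ℝ) :=
    (fun p => lam (p.1.1 + p.1.2 - 1), fun p => lam (p.1.1 + p.1.2)) with hW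
  -- extended monotonicity
  have lstep : ∀ k, 1 ≤ k → lam (k + 1) ≤ lam k := by
    intro k hk
    rcases lt_trichotomy k n with h | h | h
    · exact hmono k hk h
    · rw [h, hzero (n + 1) (by omega)]
      exact hpos
    · rw [hzero k h, hzero (k + 1) (by omega)]
  -- coordinate values of W
  have wz : ∀ i j, 1 ≤ i → i ≤ j → j ≤ n → bcZ n W i j = lam (i + j) := by
    intro i j h1 h2 h3
    unfold bcZ
    rw [dif_pos ⟨h1, h2, h3⟩]
  have wy : ∀ i j, 1 ≤ i → i ≤ j → j ≤ n → bcY n lam W i j = lam (i + j - 1) := by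
    intro i j h1 h2 h3
    unfold bcY
    by_cases hi : i = 1
    · rw [if_pos ⟨hi, by omega, h3⟩]
      subst hi
      congr 1
      omega
    · rw [if_neg (fun hc => hi hc.1), dif_pos ⟨by omega, h2, h3⟩]
  -- membership
  have hmem : W ∈ GTBC n lam := by
    refine ⟨?_, ?_, ?_⟩
    · intro i j h1 h2 h3
      rw [wz i j h1 h2 (by omega), wy i j h1 h2 (by omega), wy i (j + 1) h1 (by omega) (by omega)]
      constructor
      · have := lstep (i + j - 1) (by omega)
        rw [show i + j - 1 + 1 = i + j by omega] at this
        exact this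
      · rw [show i + (j + 1) - 1 = i + j by omega]
    · intro i h1 h2
      rw [wz i n h1 h2 le_rfl, wy i n h1 h2 le_rfl]
      constructor
      · have := lstep (i + n - 1) (by omega)
        rw [show i + n - 1 + 1 = i + n by omega] at this
        exact this
      · rw [hzero (i + n) (by omega)]
    · intro i j h1 h2 h3 h4
      rw [wz i (j - 1) h1 (by omega) (by omega), wz i j h1 (by omega) h4,
          wy (i + 1) j (by omega) h3 h4]
      constructor
      · have := lstep (i + (j - 1)) (by omega)
        rw [show i + (j - 1) + 1 = i + 1 + j - 1 by omega] at this
        exact this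
      · rw [show i + 1 + j - 1 = i + j by omega]
  refine ⟨hmem, hmem, ?_⟩
  intro x₁ hx₁ x₂ hx₂ hseg
  obtain ⟨a, b, ha, hb, hab, hsum⟩ := hseg
  obtain ⟨c11, c12, c13⟩ := hx₁
  obtain ⟨c21, c22, c23⟩ := hx₂
  -- the averaging lemma
  have key : ∀ p q r : ℝ, r ≤ p → r ≤ q → a * p + b * q = r → p = r ∧ q = r := by
    intro p q r hp hq h
    have h1 : a * (p - r) + b * (q - r) = 0 := by linear_combination h - r * hab
    have hp' : 0 ≤ a * (p - r) := mul_nonneg ha.le (sub_nonneg.2 hp)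
    have hq' : 0 ≤ b * (q - r) := mul_nonneg hb.le (sub_nonneg.2 hq)
    have h2 : a * (p - r) = 0 := by linarith
    have h3 : b * (q - r) = 0 := by linarith
    constructor
    · have := (mul_eq_zero.1 h2).resolve_left ha.ne'
      linarith
    · have := (mul_eq_zero.1 h3).resolve_left hb.ne'
      linarith
  -- evaluation lemmas
  have zeval : ∀ (v : (BCYIdx n → ℝ) × (BCZIdx n → ℝ)) i j (h : 1 ≤ i ∧ i ≤ j ∧ j ≤ n),
      bcZ n v i j = v.2 ⟨(i, j), h⟩ := by
    intro v i j h
    unfold bcZ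
    rw [dif_pos h]
  have yeval : ∀ (v : (BCYIdx n → ℝ) × (BCZIdx n → ℝ)) i j (h : 2 ≤ i ∧ i ≤ j ∧ j ≤ n),
      bcY n lam v i j = v.1 ⟨(i, j), h⟩ := by
    intro v i j h
    unfold bcY
    rw [if_neg (fun hc => by omega), dif_pos h]
  -- convex combination of coordinates equals W's coordinates
  have combZ : ∀ i j, 1 ≤ i → i ≤ j → j ≤ n →
      a * bcZ n x₁ i j + b * bcZ n x₂ i j = lam (i + j) := by
    intro i j h1 h2 h3
    have h := congrFun (congrArg Prod.snd hsum) ⟨(i, j), h1, h2, h3⟩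
    simp only [Prod.snd_add, Prod.smul_snd, Pi.add_apply, Pi.smul_apply, smul_eq_mul] at h
    rw [zeval x₁ i j ⟨h1, h2, h3⟩, zeval x₂ i j ⟨h1, h2, h3⟩]
    exact h
  have combY : ∀ i j, 1 ≤ i → i ≤ j → j ≤ n →
      a * bcY n lam x₁ i j + b * bcY n lam x₂ i j = lam (i + j - 1) := by
    intro i j h1 h2 h3
    by_cases hi : i = 1
    · subst hi
      have e : ∀ v : (BCYIdx n → ℝ) × (BCZIdx n → ℝ), bcY n lam v 1 j = lam j := by
        intro v
        unfold bcY
        rw [if_pos ⟨rfl, by omega, h3⟩]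
      rw [e, e, show 1 + j - 1 = j by omega]
      linear_combination lam j * hab
    · have h := congrFun (congrArg Prod.fst hsum) ⟨(i, j), by omega, h2, h3⟩
      simp only [Prod.fst_add, Prod.smul_fst, Pi.add_apply, Pi.smul_apply, smul_eq_mul] at h
      rw [yeval x₁ i j ⟨by omega, h2, h3⟩, yeval x₂ i j ⟨by omega, h2, h3⟩]
      exact h
  -- tightness of the relevant constraints for x₁ and x₂
  have tightA : ∀ i, 1 ≤ i → i ≤ n → bcZ n x₁ i n = 0 ∧ bcZ n x₂ i n = 0 := by
    intro i h1 h2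
    have c := combZ i n h1 h2 le_rfl
    rw [hzero (i + n) (by omega)] at c
    exact key _ _ 0 (c12 i h1 h2).2 (c22 i h1 h2).2 c
  have tightB : ∀ i j, 1 ≤ i → i ≤ j → j ≤ n - 1 →
      bcZ n x₁ i j = bcY n lam x₁ i (j + 1) ∧ bcZ n x₂ i j = bcY n lam x₂ i (j + 1) := by
    intro i j h1 h2 h3
    have e1 := combZ i j h1 h2 (by omega)
    have e2 := combY i (j + 1) h1 (by omega) (by omega)
    rw [show i + (j + 1) - 1 = i + j by omega] at e2
    have c : a * (bcZ n x₁ i j - bcY n lam x₁ i (j + 1))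
        + b * (bcZ n x₂ i j - bcY n lam x₂ i (j + 1)) = 0 := by
      linear_combination e1 - e2
    have k := key _ _ 0 (sub_nonneg.2 (c11 i j h1 h2 h3).2) (sub_nonneg.2 (c21 i j h1 h2 h3).2) c
    constructor
    · linarith [k.1]
    · linarith [k.2]
  have tightC : ∀ i j, 1 ≤ i → i ≤ n - 1 → i + 1 ≤ j → j ≤ n →
      bcY n lam x₁ (i + 1) j = bcZ n x₁ i j ∧ bcY n lam x₂ (i + 1) j = bcZ n x₂ i j := by
    intro i j h1 h2 h3 h4
    have e1 := combY (i + 1) j (by omega) h3 h4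
    have e2 := combZ i j h1 (by omega) h4
    rw [show i + 1 + j - 1 = i + j by omega] at e1
    have c : a * (bcY n lam x₁ (i + 1) j - bcZ n x₁ i j)
        + b * (bcY n lam x₂ (i + 1) j - bcZ n x₂ i j) = 0 := by
      linear_combination e1 - e2
    have k := key _ _ 0 (sub_nonneg.2 (c13 i j h1 h2 h3 h4).2) (sub_nonneg.2 (c23 i j h1 h2 h3 h4).2) c
    constructor
    · linarith [k.1]
    · linarith [k.2]
  -- the tight constraints determine the point
  have main : ∀ v : (BCYIdx n → ℝ) × (BCZIdx n → ℝ),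
      (∀ i, 1 ≤ i → i ≤ n → bcZ n v i n = 0) →
      (∀ i j, 1 ≤ i → i ≤ j → j ≤ n - 1 → bcZ n v i j = bcY n lam v i (j + 1)) →
      (∀ i j, 1 ≤ i → i ≤ n - 1 → i + 1 ≤ j → j ≤ n → bcY n lam v (i + 1) j = bcZ n v i j) →
      v = W := by
    intro v tA tB tC
    have vz : ∀ i, 1 ≤ i → ∀ j, i ≤ j → j ≤ n → bcZ n v i j = lam (i + j) := by
      intro i hi
      induction i, hi using Nat.le_induction with
      | base =>
        intro j h1 h2
        by_cases hj : j = n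
        · rw [hj, tA 1 le_rfl (by omega), hzero (1 + n) (by omega)]
        · rw [tB 1 j le_rfl h1 (by omega)]
          unfold bcY
          rw [if_pos ⟨rfl, by omega, by omega⟩]
          congr 1
          omega
      | succ i hi ih =>
        intro j h1 h2
        by_cases hj : j = n
        · rw [hj, tA (i + 1) (by omega) (by omega), hzero (i + 1 + n) (by omega)]
        · rw [tB (i + 1) j (by omega) h1 (by omega),
              tC i (j + 1) hi (by omega) (by omega) (by omega),
              ih (j + 1) (by omega) (by omega)]
          congr 1
          omega
    have vy : ∀ i j, 2 ≤ i → i ≤ j → j ≤ n → bcY n lam v i j = lam (i + j - 1) := by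
      intro i j h1 h2 h3
      have e := tC (i - 1) j (by omega) (by omega) (by omega) h3
      rw [show i - 1 + 1 = i by omega] at e
      rw [e, vz (i - 1) (by omega) j (by omega) h3]
      congr 1
      omega
    refine Prod.ext_iff.2 ⟨?_, ?_⟩
    · funext p
      obtain ⟨⟨i, j⟩, h⟩ := p
      have e : bcY n lam v i j = v.1 ⟨(i, j), h⟩ := by
        unfold bcY
        rw [if_neg (fun hc => by omega), dif_pos h]
      have hv := vy i j h.1 h.2.1 h.2.2
      rw [e] at hv
      rw [hv]
    · funext p
      obtain ⟨⟨i, j⟩, h⟩ := p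
      have e : bcZ n v i j = v.2 ⟨(i, j), h⟩ := by
        unfold bcZ
        rw [dif_pos h]
      have hv := vz i h.1 j h.2.1 h.2.2
      rw [e] at hv
      rw [hv]
  exact main x₁ (fun i h1 h2 => (tightA i h1 h2).1) (fun i j h1 h2 h3 => (tightB i j h1 h2 h3).1)
      (fun i j h1 h2 h3 h4 => (tightC i j h1 h2 h3 h4).1)
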